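/- For i.i.d. continuous observations and integers 1 ≤ r ≤ t ≤ n, the conditional probability that the t-th observation is the overall best satisfies P(A_{t,n} = 1 | R_t = r) = (t/n) · 1{r = 1}. -/

import Mathlib

open MeasureTheory ProbabilityTheory Finset
open scoped ENNReal Classical

noncomputable section

/-- The σ-algebra on `Ω` generated by the functions `f 1, …, f t`. -/
def genFilt {Ω β : Type*} [MeasurableSpace β] (f : ℕ → Ω → β) (t : ℕ) :
    MeasurableSpace Ω :=
  ⨆ i ∈ Set.Icc 1 t, MeasurableSpace.comap (f i) inferInstance

/-- `τ` is a stopping time with values in `{1,…,n}` of the filtration generated by `f`. -/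
def IsStopTime {Ω β : Type*} [MeasurableSpace β] (f : ℕ → Ω → β) (n : ℕ) (τ : Ω → ℕ) : Prop :=
  (∀ ω, τ ω ∈ Set.Icc 1 n) ∧ ∀ t, MeasurableSet[genFilt f t] {ω | τ ω = t}

/-- The family `(f i)_{i ∈ s}` is independent under `μ`. -/
def IndepSeq {Ω β : Type*} [MeasurableSpace Ω] [MeasurableSpace β]
    (f : ℕ → Ω → β) (s : Set ℕ) (μ : Measure Ω) : Prop :=
  iIndepFun (m := fun _ : s => (inferInstance : MeasurableSpace β)) (fun i : s => f i.1) μ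

/-- `N` is independent of the family `(f i)_{i ∈ s}`. -/
def IndepOfSeq {Ω β : Type*} [MeasurableSpace Ω] [MeasurableSpace β]
    (N : Ω → ℕ) (f : ℕ → Ω → β) (s : Set ℕ) (μ : Measure Ω) : Prop :=
  IndepFun N (fun ω (i : s) => f i.1 ω) μ

/-- The absolute rank `A_{t,k}` of `X t` among `X 1, …, X k`
(the largest observation has rank 1). -/
def absRank {Ω : Type*} (X : ℕ → Ω → ℝ) (t k : ℕ) (ω : Ω) : ℕ :=
  ((Finset.Icc 1 k).filter fun j => X t ω ≤ X j ω).card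

/-- The relative rank `R_t = A_{t,t}`. -/
def relRank {Ω : Type*} (X : ℕ → Ω → ℝ) (t : ℕ) (ω : Ω) : ℕ := absRank X t t ω

/-- `(X i)_{i ∈ s}` are i.i.d. with an atomless (continuous) common distribution. -/
def IIDContinuousOn {Ω : Type*} [MeasurableSpace Ω] (X : ℕ → Ω → ℝ) (s : Set ℕ)
    (μ : Measure Ω) : Prop :=
  (∀ i ∈ s, Measurable (X i)) ∧ IndepSeq X s μ ∧
  (∀ i ∈ s, ∀ j ∈ s, IdentDistrib (X i) (X j) μ μ) ∧
  (∀ i ∈ s, ∀ x : ℝ, μ {ω | X i ω = x} = 0)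

section SecretaryAux

variable {Ω : Type*} [MeasurableSpace Ω] {μ : Measure Ω} [IsProbabilityMeasure μ]
  {n : ℕ} {X : ℕ → Ω → ℝ}

/-- The event that `X j` is the strict maximum among `X 1, …, X k`. -/
def strictMaxEvent (X : ℕ → Ω → ℝ) (k j : ℕ) : Set Ω :=
  {ω | ∀ i ∈ Finset.Icc 1 k, i ≠ j → X i ω < X j ω}

lemma mem_setIcc_of_mem_finsetIcc {i k : ℕ} (h : i ∈ Finset.Icc 1 k) (hk : k ≤ n) :
    i ∈ Set.Icc 1 n := by
  rw [Finset.mem_Icc] at h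
  exact Set.mem_Icc.2 ⟨h.1, le_trans h.2 hk⟩

lemma absRank_eq_one_iff {t k : ℕ} (ht : t ∈ Finset.Icc 1 k) (ω : Ω) :
    absRank X t k ω = 1 ↔ ∀ i ∈ Finset.Icc 1 k, i ≠ t → X i ω < X t ω := by
  unfold absRank
  constructor
  · intro h i hik hit
    obtain ⟨a, ha⟩ := Finset.card_eq_one.1 h
    have htf : t ∈ (Finset.Icc 1 k).filter fun j => X t ω ≤ X j ω :=
      Finset.mem_filter.2 ⟨ht, le_refl _⟩
    rw [ha, Finset.mem_singleton] at htf
    by_contra hc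
    push_neg at hc
    have hif : i ∈ (Finset.Icc 1 k).filter fun j => X t ω ≤ X j ω :=
      Finset.mem_filter.2 ⟨hik, hc⟩
    rw [ha, Finset.mem_singleton] at hif
    exact hit (hif.trans htf.symm)
  · intro h
    have hfil : ((Finset.Icc 1 k).filter fun j => X t ω ≤ X j ω) = {t} := by
      ext i
      simp only [Finset.mem_filter, Finset.mem_singleton]
      constructor
      · rintro ⟨hik, hle⟩
        by_contra hc
        exact absurd hle (not_le.2 (h i hik hc))
      · rintro rfl
        exact ⟨ht, le_refl _⟩
    rw [hfil, Finset.card_singleton]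

lemma marginal_eq (hX : IIDContinuousOn X (Set.Icc 1 n) μ) (hn : 1 ≤ n)
    {i : ℕ} (hi : i ∈ Set.Icc 1 n) : μ.map (X i) = μ.map (X 1) :=
  (hX.2.2.1 i hi 1 (Set.mem_Icc.2 ⟨le_refl 1, hn⟩)).map_eq

lemma joint_eq_pi (hX : IIDContinuousOn X (Set.Icc 1 n) μ) (hn : 1 ≤ n) :
    μ.map (fun ω (i : Set.Icc 1 n) => X i ω)
      = Measure.pi (fun _ : Set.Icc 1 n => μ.map (X 1)) := by
  have hm : ∀ i : Set.Icc 1 n, Measurable (X i) := fun i => hX.1 i i.2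
  have htuple : Measurable (fun ω (i : Set.Icc 1 n) => X i ω) :=
    measurable_pi_lambda _ hm
  haveI : IsProbabilityMeasure (μ.map (X 1)) :=
    Measure.isProbabilityMeasure_map (hX.1 1 (Set.mem_Icc.2 ⟨le_refl 1, hn⟩)).aemeasurable
  have hind : iIndepFun (m := fun _ : Set.Icc 1 n => (inferInstance : MeasurableSpace ℝ))
      (fun i : Set.Icc 1 n => X i.1) μ := hX.2.1
  refine (Measure.pi_eq fun A hA => ?_).symm
  rw [Measure.map_apply htuple (MeasurableSet.univ_pi hA)]
  have hpre : (fun ω (i : Set.Icc 1 n) => X i ω) ⁻¹' Set.pi Set.univ A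
      = ⋂ i : Set.Icc 1 n, X (i : ℕ) ⁻¹' A i := by
    ext ω
    simp [Set.mem_pi, Set.mem_iInter]
  rw [hpre, hind.meas_iInter fun i => ⟨A i, hA i, rfl⟩]
  refine Finset.prod_congr rfl fun i _ => ?_
  rw [← Measure.map_apply (hm i) (hA i), marginal_eq hX hn i.2]

lemma strictMax_symm (hX : IIDContinuousOn X (Set.Icc 1 n) μ) {k j j' : ℕ} (hk : k ≤ n)
    (hj : j ∈ Finset.Icc 1 k) (hj' : j' ∈ Finset.Icc 1 k) :
    μ (strictMaxEvent X k j) = μ (strictMaxEvent X k j') := by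
  rcases eq_or_ne j j' with rfl | hne
  · rfl
  have hn : 1 ≤ n := le_trans ((Finset.mem_Icc.1 hj).1.trans (Finset.mem_Icc.1 hj).2) hk
  haveI : IsProbabilityMeasure (μ.map (X 1)) :=
    Measure.isProbabilityMeasure_map (hX.1 1 (Set.mem_Icc.2 ⟨le_refl 1, hn⟩)).aemeasurable
  have hjn : j ∈ Set.Icc 1 n := mem_setIcc_of_mem_finsetIcc hj hk
  have hj'n : j' ∈ Set.Icc 1 n := mem_setIcc_of_mem_finsetIcc hj' hk
  set J : Set.Icc 1 n := ⟨j, hjn⟩ with hJ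
  set J' : Set.Icc 1 n := ⟨j', hj'n⟩ with hJ'
  have hJJ' : J ≠ J' := fun hc => hne (congrArg Subtype.val hc)
  set B : Set.Icc 1 n → Set ((Set.Icc 1 n) → ℝ) := fun l =>
    {g | ∀ i : Set.Icc 1 n, (i : ℕ) ∈ Finset.Icc 1 k → i ≠ l → g i < g l} with hB
  have hBmeas : ∀ l, MeasurableSet (B l) := by
    intro l
    have : B l = ⋂ (i : Set.Icc 1 n) (_ : (i : ℕ) ∈ Finset.Icc 1 k) (_ : i ≠ l),
        {g : (Set.Icc 1 n) → ℝ | g i < g l} := by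
      ext g
      simp [hB, Set.mem_iInter]
    rw [this]
    exact MeasurableSet.iInter fun i => MeasurableSet.iInter fun _ =>
      MeasurableSet.iInter fun _ =>
        measurableSet_lt (measurable_pi_apply _) (measurable_pi_apply _)
  have hm : ∀ i : Set.Icc 1 n, Measurable (X i) := fun i => hX.1 i i.2
  have htuple : Measurable (fun ω (i : Set.Icc 1 n) => X i ω) :=
    measurable_pi_lambda _ hm
  have hpre : ∀ (l : Set.Icc 1 n),
      strictMaxEvent X k (l : ℕ) = (fun ω (i : Set.Icc 1 n) => X i ω) ⁻¹' B l := by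
    intro l
    ext ω
    constructor
    · intro h i hik hil
      exact h i hik fun hc => hil (Subtype.ext hc)
    · intro h i hik hil
      exact h ⟨i, mem_setIcc_of_mem_finsetIcc hik hk⟩ hik
        fun hc => hil (congrArg Subtype.val hc)
  have hmu : ∀ (l : Set.Icc 1 n), μ (strictMaxEvent X k (l : ℕ))
      = Measure.pi (fun _ : Set.Icc 1 n => μ.map (X 1)) (B l) := by
    intro l
    rw [hpre l, ← Measure.map_apply htuple (hBmeas l), joint_eq_pi hX hn]
  rw [hmu J, hmu J']
  -- permutation invariance via the swap J ↔ J'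
  set e : (Set.Icc 1 n) ≃ (Set.Icc 1 n) := Equiv.swap J J' with he
  have hmp : MeasurePreserving
      (MeasurableEquiv.piCongrLeft (fun _ : Set.Icc 1 n => ℝ) e)
      (Measure.pi fun _ : Set.Icc 1 n => μ.map (X 1))
      (Measure.pi fun _ : Set.Icc 1 n => μ.map (X 1)) :=
    MeasureTheory.measurePreserving_piCongrLeft (fun _ : Set.Icc 1 n => μ.map (X 1)) e
  have hF : ∀ (g : (Set.Icc 1 n) → ℝ) (x : Set.Icc 1 n),
      (MeasurableEquiv.piCongrLeft (fun _ : Set.Icc 1 n => ℝ) e) g x = g (e x) := by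
    intro g x
    have h1 : (MeasurableEquiv.piCongrLeft (fun _ : Set.Icc 1 n => ℝ) e) g (e (e x))
        = g (e x) := Equiv.piCongrLeft_apply_apply (fun _ => ℝ) e g (e x)
    rwa [Equiv.swap_apply_self] at h1
  have hset : (MeasurableEquiv.piCongrLeft (fun _ : Set.Icc 1 n => ℝ) e) ⁻¹' (B J') = B J := by
    ext g
    simp only [Set.mem_preimage, hB, Set.mem_setOf_eq, hF]
    have heJ' : e J' = J := Equiv.swap_apply_right J J'
    have heJ : e J = J' := Equiv.swap_apply_left J J'
    rw [heJ']
    constructor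
    · intro h i hik hij
      by_cases hcase : i = J'
      · subst hcase
        have := h J hj hJJ'
        rwa [heJ] at this
      · have := h i hik hcase
        rwa [Equiv.swap_apply_of_ne_of_ne hij hcase] at this
    · intro h i hik hij'
      by_cases hcase : i = J
      · subst hcase
        rw [heJ]
        exact h J' hj' (Ne.symm hJJ')
      · rw [Equiv.swap_apply_of_ne_of_ne hcase hij']
        exact h i hik hcase
  calc Measure.pi (fun _ : Set.Icc 1 n => μ.map (X 1)) (B J)
      = Measure.pi (fun _ : Set.Icc 1 n => μ.map (X 1))
          ((MeasurableEquiv.piCongrLeft (fun _ : Set.Icc 1 n => ℝ) e) ⁻¹' (B J')) := by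
        rw [hset]
    _ = Measure.pi (fun _ : Set.Icc 1 n => μ.map (X 1)) (B J') :=
        hmp.measure_preimage_equiv (B J')

lemma ties_null (hX : IIDContinuousOn X (Set.Icc 1 n) μ) {i j : ℕ}
    (hi : i ∈ Set.Icc 1 n) (hj : j ∈ Set.Icc 1 n) (hij : i ≠ j) :
    μ {ω | X i ω = X j ω} = 0 := by
  have hmi : Measurable (X i) := hX.1 i hi
  have hmj : Measurable (X j) := hX.1 j hj
  haveI : IsProbabilityMeasure (μ.map (X i)) := Measure.isProbabilityMeasure_map hmi.aemeasurable
  haveI : IsProbabilityMeasure (μ.map (X j)) := Measure.isProbabilityMeasure_map hmj.aemeasurable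
  have hind : iIndepFun (m := fun _ : Set.Icc 1 n => (inferInstance : MeasurableSpace ℝ))
      (fun l : Set.Icc 1 n => X l.1) μ := hX.2.1
  have hIndep : IndepFun (X i) (X j) μ :=
    hind.indepFun (i := ⟨i, hi⟩) (j := ⟨j, hj⟩) fun hc => hij (congrArg Subtype.val hc)
  have hmap : μ.map (fun ω => (X i ω, X j ω)) = (μ.map (X i)).prod (μ.map (X j)) :=
    (indepFun_iff_map_prod_eq_prod_map_map hmi.aemeasurable hmj.aemeasurable).1 hIndep
  have hdiag : MeasurableSet {p : ℝ × ℝ | p.1 = p.2} :=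
    measurableSet_eq_fun measurable_fst measurable_snd
  have hsetrw : {ω | X i ω = X j ω} = (fun ω => (X i ω, X j ω)) ⁻¹' {p | p.1 = p.2} := rfl
  rw [hsetrw, ← Measure.map_apply (hmi.prodMk hmj) hdiag, hmap,
    Measure.prod_apply hdiag]
  have hsing : ∀ x : ℝ, (μ.map (X j)) {x} = 0 := by
    intro x
    rw [Measure.map_apply hmj (measurableSet_singleton x)]
    have h2 : X j ⁻¹' {x} = {ω | X j ω = x} := by
      ext ω
      simp
    rw [h2]
    exact hX.2.2.2 j hj x
  have hprex : ∀ x : ℝ, Prod.mk x ⁻¹' {p : ℝ × ℝ | p.1 = p.2} = {x} := by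
    intro x
    ext y
    simp [eq_comm]
  simp [hprex, hsing]

lemma strictMaxEvent_measurableSet (hX : IIDContinuousOn X (Set.Icc 1 n) μ)
    {k j : ℕ} (hk : k ≤ n) (hj : j ∈ Set.Icc 1 n) :
    MeasurableSet (strictMaxEvent X k j) := by
  have : strictMaxEvent X k j = ⋂ (i : ℕ) (_ : i ∈ Finset.Icc 1 k) (_ : i ≠ j),
      {ω | X i ω < X j ω} := by
    ext ω
    simp [strictMaxEvent, Set.mem_iInter]
  rw [this]
  exact MeasurableSet.iInter fun i => MeasurableSet.iInter fun hik =>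
    MeasurableSet.iInter fun _ =>
      measurableSet_lt (hX.1 i (mem_setIcc_of_mem_finsetIcc hik hk)) (hX.1 j hj)

lemma strictMax_measure (hX : IIDContinuousOn X (Set.Icc 1 n) μ) {k j : ℕ} (hk : k ≤ n)
    (hj : j ∈ Finset.Icc 1 k) :
    μ (strictMaxEvent X k j) = ((k : ℝ≥0∞))⁻¹ := by
  have hk1 : 1 ≤ k := (Finset.mem_Icc.1 hj).1.trans (Finset.mem_Icc.1 hj).2
  have hmeasE : ∀ a ∈ Finset.Icc 1 k, MeasurableSet (strictMaxEvent X k a) :=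
    fun a ha => strictMaxEvent_measurableSet hX hk (mem_setIcc_of_mem_finsetIcc ha hk)
  -- the events are pairwise disjoint
  have hdisj : Set.PairwiseDisjoint (↑(Finset.Icc 1 k)) (strictMaxEvent X k) := by
    intro a ha b hb hab
    refine Set.disjoint_left.2 fun ω hωa hωb => ?_
    have h1 : X b ω < X a ω := hωa b hb (Ne.symm hab)
    have h2 : X a ω < X b ω := hωb a ha hab
    exact absurd (h1.trans h2) (lt_irrefl _)
  -- union has full measure
  have hcompl : (⋃ a ∈ Finset.Icc 1 k, strictMaxEvent X k a)ᶜ ⊆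
      ⋃ (a : ℕ) (_ : a ∈ Finset.Icc 1 k) (b : ℕ) (_ : b ∈ Finset.Icc 1 k) (_ : a ≠ b),
        {ω | X a ω = X b ω} := by
    intro ω hω
    rw [Set.mem_compl_iff] at hω
    obtain ⟨b, hb, hbmax⟩ := Finset.exists_max_image (Finset.Icc 1 k) (fun i => X i ω)
      ⟨j, hj⟩
    have hωb : ω ∉ strictMaxEvent X k b := fun hmem => hω (Set.mem_biUnion hb hmem)
    simp only [strictMaxEvent, Set.mem_setOf_eq] at hωb
    push_neg at hωb
    obtain ⟨a, ha, hab, hnlt⟩ := hωb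
    refine Set.mem_iUnion.2 ⟨a, Set.mem_iUnion.2 ⟨ha, Set.mem_iUnion.2 ⟨b,
      Set.mem_iUnion.2 ⟨hb, Set.mem_iUnion.2 ⟨hab, ?_⟩⟩⟩⟩⟩
    exact le_antisymm (hbmax a ha) hnlt
  have hties : μ (⋃ (a : ℕ) (_ : a ∈ Finset.Icc 1 k) (b : ℕ) (_ : b ∈ Finset.Icc 1 k)
      (_ : a ≠ b), {ω | X a ω = X b ω}) = 0 := by
    refine measure_iUnion_null fun a => measure_iUnion_null fun ha =>
      measure_iUnion_null fun b => measure_iUnion_null fun hb =>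
      measure_iUnion_null fun hab => ?_
    exact ties_null hX (mem_setIcc_of_mem_finsetIcc ha hk)
      (mem_setIcc_of_mem_finsetIcc hb hk) hab
  have hUmeas : MeasurableSet (⋃ a ∈ Finset.Icc 1 k, strictMaxEvent X k a) :=
    MeasurableSet.biUnion (Finset.Icc 1 k).countable_toSet hmeasE
  have hUfull : μ (⋃ a ∈ Finset.Icc 1 k, strictMaxEvent X k a) = 1 := by
    have hcompl0 : μ (⋃ a ∈ Finset.Icc 1 k, strictMaxEvent X k a)ᶜ = 0 :=
      measure_mono_null hcompl hties
    have := measure_add_measure_compl hUmeas (μ := μ)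
    rw [hcompl0, add_zero, measure_univ] at this
    exact this
  have hsum : ∑ a ∈ Finset.Icc 1 k, μ (strictMaxEvent X k a) = 1 := by
    rw [← measure_biUnion_finset hdisj hmeasE, hUfull]
  have hconst : ∑ a ∈ Finset.Icc 1 k, μ (strictMaxEvent X k a)
      = (k : ℝ≥0∞) * μ (strictMaxEvent X k j) := by
    rw [Finset.sum_congr rfl fun a ha => strictMax_symm hX hk ha hj]
    rw [Finset.sum_const, Nat.card_Icc]
    simp [nsmul_eq_mul]
  have hkey : (k : ℝ≥0∞) * μ (strictMaxEvent X k j) = 1 := by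
    rw [← hconst, hsum]
  have hk0 : (k : ℝ≥0∞) ≠ 0 := Nat.cast_ne_zero.2 (by omega)
  have hktop : (k : ℝ≥0∞) ≠ ⊤ := ENNReal.natCast_ne_top k
  calc μ (strictMaxEvent X k j)
      = (k : ℝ≥0∞)⁻¹ * ((k : ℝ≥0∞) * μ (strictMaxEvent X k j)) := by
        rw [← mul_assoc, ENNReal.inv_mul_cancel hk0 hktop, one_mul]
    _ = (k : ℝ≥0∞)⁻¹ := by rw [hkey, mul_one]

end SecretaryAux

/-- `P(A_{t,n} = 1 | R_t = r) = (t/n) · 1{r = 1}`. -/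
theorem stmt_15 {Ω : Type*} [MeasurableSpace Ω] (μ : Measure Ω) [IsProbabilityMeasure μ]
    (n : ℕ) (X : ℕ → Ω → ℝ) (hX : IIDContinuousOn X (Set.Icc 1 n) μ)
    (t : ℕ) (ht1 : 1 ≤ t) (htn : t ≤ n)
    (r : ℕ) (hr : r ∈ Set.Icc 1 t) :
    μ[|{ω | relRank X t ω = r}] {ω | absRank X t n ω = 1}
      = if r = 1 then (t : ℝ≥0∞) / (n : ℝ≥0∞) else 0 := by
  have ht' : t ∈ Finset.Icc 1 t := Finset.mem_Icc.2 ⟨ht1, le_refl t⟩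
  have htn' : t ∈ Finset.Icc 1 n := Finset.mem_Icc.2 ⟨ht1, htn⟩
  have hn1 : 1 ≤ n := le_trans ht1 htn
  -- measurability of relRank
  have hmRel : Measurable (fun ω => relRank X t ω) := by
    have hrw : (fun ω => relRank X t ω)
        = fun ω => ∑ j ∈ Finset.Icc 1 t, if X t ω ≤ X j ω then 1 else 0 := by
      ext ω
      exact Finset.card_filter (fun j => X t ω ≤ X j ω) (Finset.Icc 1 t)
    rw [hrw]
    exact Finset.measurable_sum _ fun j hjt => Measurable.ite
      (measurableSet_le (hX.1 t (Set.mem_Icc.2 ⟨ht1, htn⟩))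
        (hX.1 j (mem_setIcc_of_mem_finsetIcc hjt htn)))
      measurable_const measurable_const
  have hmR : MeasurableSet {ω | relRank X t ω = r} :=
    hmRel (measurableSet_singleton r)
  -- set identifications
  have hR1 : {ω | relRank X t ω = 1} = strictMaxEvent X t t := by
    ext ω
    exact absRank_eq_one_iff ht' ω
  have hA1 : {ω | absRank X t n ω = 1} = strictMaxEvent X n t := by
    ext ω
    exact absRank_eq_one_iff htn' ω
  by_cases hcase : r = 1
  · subst hcase
    rw [ProbabilityTheory.cond_apply hmR, if_pos rfl]
    have hsub : {ω | absRank X t n ω = 1} ⊆ {ω | relRank X t ω = 1} := by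
      rw [hR1, hA1]
      intro ω hω i hik hit
      exact hω i (Finset.Icc_subset_Icc_right htn hik) hit
    rw [Set.inter_eq_self_of_subset_right hsub, hR1, hA1,
      strictMax_measure hX htn ht', strictMax_measure hX (le_refl n) htn',
      inv_inv, div_eq_mul_inv]
  · rw [ProbabilityTheory.cond_apply hmR, if_neg hcase]
    have hempty : {ω | relRank X t ω = r} ∩ {ω | absRank X t n ω = 1} = ∅ := by
      ext ω
      simp only [Set.mem_inter_iff, Set.mem_setOf_eq, Set.mem_empty_iff_false, iff_false,
        not_and]
      intro hrel habs
      apply hcase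
      rw [← hrel]
      refine (absRank_eq_one_iff ht' ω).2 fun i hik hit => ?_
      exact (absRank_eq_one_iff htn' ω).1 habs i (Finset.Icc_subset_Icc_right htn hik) hit
    rw [hempty, measure_empty, mul_zero]
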